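/- Fubini for Grothendieck constructions: let H : D → Cat be a functor from a small category to small categories, with Grothendieck construction ∫_D H and projection p : ∫_D H → D. For a diagram X : ∫_D H → M in a category M, if the colimit colim^{H(d)} X of the restriction of X to each fiber H(d) exists for all d, and if either colim over ∫_D H of X exists or the iterated colimit colim^{d ∈ D} colim^{H(d)} X exists, then both exist and are naturally isomorphic. A key step: for each object d of D, the inclusion of the fiber p⁻¹(d) into the comma category (p ↓ d) admits a left adjoint, hence is right cofinal. -/

import Mathlib

open CategoryTheory CategoryTheory.Limits

universe w v u

section Part2
variable {D : Type u} [SmallCategory D] (H : D ⥤ Cat.{u, u}) (d : D)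

/-- Inclusion of the fiber into the costructured arrow category. -/
def fiberIncl : ↑(H.obj d) ⥤ CostructuredArrow (Grothendieck.forget H) d :=
  (Grothendieck.ι H d).toCostructuredArrow (Grothendieck.forget H) d (fun _ => 𝟙 _)
    (fun g => by simp [Grothendieck.ι]; exact Category.comp_id _)

theorem eqToHom_comp_map_eqToHom {C E : Type*} [Category C] [Category E] (F : C ⥤ E)
    {X Y : C} {Z : E} (p : Z = F.obj X) (q : X = Y) (hZ : Z = F.obj Y) :
    eqToHom p ≫ F.map (eqToHom q) = eqToHom hZ := by
  subst q; simp

theorem eqToHom_sandwich {C : Type*} [Category C] {A B B' P Q Q' R : C} (M : P ⟶ Q)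
    (U : Q ⟶ R) (e1 : A = B) (e2 : B = P) (e3 : A = B') (e4 : B' = P) (e5 : Q = Q')
    (e6 : Q' = Q) :
    eqToHom e1 ≫ eqToHom e2 ≫ M ≫ U =
      (eqToHom e3 ≫ eqToHom e4 ≫ M ≫ eqToHom e5) ≫ eqToHom e6 ≫ U := by
  subst_vars; simp

variable {H d} in
def fiberHom (a : CostructuredArrow (Grothendieck.forget H) d) : a.left.base ⟶ d := a.hom

variable {H d} in
lemma fiberHom_w {a b : CostructuredArrow (Grothendieck.forget H) d} (η : a ⟶ b) :
    η.left.base ≫ fiberHom b = fiberHom a := CostructuredArrow.w η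

variable {H d} in
lemma fiberIncl_w {a : CostructuredArrow (Grothendieck.forget H) d} {x : ↑(H.obj d)}
    (η : a ⟶ (fiberIncl H d).obj x) : η.left.base = fiberHom a := by
  exact (Category.comp_id _).symm.trans (CostructuredArrow.w η)

variable {H d} in
lemma fiberL_eq {a b : CostructuredArrow (Grothendieck.forget H) d} (η : a ⟶ b) :
    (H.map (fiberHom a)).toFunctor.obj a.left.fiber = (H.map (fiberHom b)).toFunctor.obj ((H.map η.left.base).toFunctor.obj a.left.fiber) := by
  rw [← fiberHom_w η, H.map_comp]; rfl

/-- Left adjoint: pushforward along the structure map. -/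
def fiberL : CostructuredArrow (Grothendieck.forget H) d ⥤ ↑(H.obj d) where
  obj a := (H.map (fiberHom a)).toFunctor.obj a.left.fiber
  map {a b} η := eqToHom (fiberL_eq η) ≫ (H.map (fiberHom b)).toFunctor.map η.left.fiber
  map_id a := by
    simp [Grothendieck.id_fiber, eqToHom_map]
    exact eqToHom_comp_map_eqToHom _ _ _ rfl
  map_comp {a b c} η θ := by
    have hb : H.map (fiberHom b) = H.map θ.left.base ≫ H.map (fiberHom c) := by
      rw [← H.map_comp]
      congr 1
      exact (fiberHom_w θ).symm
    simp only [CostructuredArrow.comp_left, Grothendieck.comp_fiber, Functor.map_comp,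
      eqToHom_map, Category.assoc]
    rw [Functor.congr_hom (congrArg Cat.Hom.toFunctor hb) η.left.fiber]
    simp [eqToHom_map, eqToHom_trans, eqToHom_trans_assoc]
    exact eqToHom_trans_assoc _ _ _

/-- The adjunction between pushforward and fiber inclusion. -/
def fiberAdj : fiberL H d ⊣ fiberIncl H d :=
  Adjunction.mkOfHomEquiv
    { homEquiv := fun a x =>
        { toFun := fun u => CostructuredArrow.homMk
            (⟨fiberHom a, u⟩ : a.left ⟶ Grothendieck.mk d x) (Category.comp_id _)
          invFun := fun η => eqToHom (by
              have h : η.left.base = fiberHom a := fiberIncl_w η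
              rw [h]; rfl) ≫ η.left.fiber
          left_inv := fun u => by exact Category.id_comp u
          right_inv := fun η => by
            apply CostructuredArrow.hom_ext
            apply Grothendieck.ext
            · exact (eqToHom_trans_assoc _ _ _).trans (by simp)
            · have h : η.left.base = fiberHom a := fiberIncl_w η
              exact h.symm }
      homEquiv_naturality_left_symm := fun {a b x} η u => by
        have hb : u.left.base = fiberHom b := fiberIncl_w u
        have hfun : H.map (fiberHom b) = H.map u.left.base := by rw [hb]; rfl
        show eqToHom _ ≫ (η ≫ u).left.fiber = (fiberL H d).map η ≫ eqToHom _ ≫ u.left.fiber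
        dsimp [fiberL]
        rw [Functor.congr_hom (congrArg Cat.Hom.toFunctor hfun) η.left.fiber]
        exact eqToHom_sandwich _ _ _ _ _ _ _ _
      homEquiv_naturality_right := fun {a x y} u g => by
        apply CostructuredArrow.hom_ext
        apply Grothendieck.ext
        · show eqToHom _ ≫ (u ≫ g) = eqToHom _ ≫ (H.map (𝟙 d)).toFunctor.map u ≫ eqToHom _ ≫ g
          rw [Functor.congr_hom (congrArg Cat.Hom.toFunctor (H.map_id d)) u]
          simp
          exact (eqToHom_trans_assoc _ _ _).symm
        · show fiberHom a = fiberHom a ≫ 𝟙 d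
          simp }
end Part2

section Part1
variable {D : Type u} [SmallCategory D] {H : D ⥤ Cat.{u, u}}
  {M : Type w} [Category.{v} M] (X : Grothendieck H ⥤ M) (Y : D ⥤ M)
  (ψ : ∀ d : D, (Grothendieck.ι H d ⋙ X) ⟶ (Functor.const ↑(H.obj d)).obj (Y.obj d))

theorem eqToHom_map_id_sandwich {C E : Type*} [Category C] [Category E] (F : C ⥤ E)
    {A Y Z : E} {W : C} (f : Y ⟶ Z) (e1 : A = Y) (e2 : A = F.obj W) (e3 : F.obj W = Y) :
    eqToHom e1 ≫ f = eqToHom e2 ≫ F.map (𝟙 W) ≫ eqToHom e3 ≫ f := by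
  subst e3; subst e1; simp

theorem assoc_aux {C : Type*} [Category C] {A B C' E F G : C} (a : A ⟶ B) (b : B ⟶ C')
    (c : C' ⟶ E) (c' : B ⟶ E) (sq : E ⟶ F) (x : A ⟶ G) (y : G ⟶ E)
    (h : b ≫ c = c' ≫ 𝟙 E) (hn : x ≫ y = a ≫ c') :
    a ≫ b ≫ c ≫ sq = x ≫ y ≫ sq := by
  rw [← Category.assoc b, h, ← Category.assoc x, hn]; simp

lemma groth_factor {p q : Grothendieck H} (g : p ⟶ q) :
    g = (Grothendieck.ιNatTrans g.base).app p.fiber ≫ (Grothendieck.ι H q.base).map g.fiber := by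
  apply Grothendieck.ext <;> simp [Grothendieck.ι, eqToHom_map]
  exact eqToHom_map_id_sandwich _ _ _ _ _

variable
  (hnat : ∀ (d d' : D) (f : d ⟶ d') (x : ↑(H.obj d)),
      (ψ d).app x ≫ Y.map f =
        X.map ((Grothendieck.ιNatTrans f).app x) ≫ (ψ d').app ((H.map f).toFunctor.obj x))

/-- From a cocone on `Y`, a cocone on `X`. -/
@[reducible] def coconeXofY (s : Cocone Y) : Cocone X where
  pt := s.pt
  ι :=
    { app := fun p => (ψ p.base).app p.fiber ≫ s.ι.app p.base
      naturality := fun p q g => by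
        dsimp
        have h := (ψ q.base).naturality g.fiber
        simp only [Functor.comp_map, Functor.const_obj_map, Category.comp_id] at h
        rw [Category.comp_id, ← s.w g.base]
        conv_lhs => rw [groth_factor g]; erw [X.map_comp]
        simp only [Category.assoc]
        exact assoc_aux _ _ _ _ _ _ _ h (hnat _ _ _ _) }

variable (hc : ∀ d : D, IsColimit (⟨Y.obj d, ψ d⟩ : Cocone (Grothendieck.ι H d ⋙ X)))

/-- From a cocone on `X`, a cocone on `Y`. -/
@[reducible] def coconeYofX (s : Cocone X) : Cocone Y where
  pt := s.pt
  ι :=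
    { app := fun d => (hc d).desc (s.whisker (Grothendieck.ι H d))
      naturality := fun d d' f => by
        dsimp
        rw [Category.comp_id]
        refine (hc d).hom_ext fun x => ?_
        rw [← Category.assoc, hnat, Category.assoc, (hc d').fac, (hc d).fac]
        exact s.w ((Grothendieck.ιNatTrans f).app x) }

def isColimitCoconeYofX {s : Cocone X} (hs : IsColimit s) :
    IsColimit (coconeYofX X Y ψ hnat hc s) where
  desc t := hs.desc (coconeXofY X Y ψ hnat t)
  fac t d := by
    refine (hc d).hom_ext fun x => ?_
    dsimp [coconeYofX]
    rw [← Category.assoc, (hc d).fac]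
    simp only [Cocone.whisker_ι, Functor.whiskerLeft_app]
    rw [hs.fac]
    rfl
  uniq t m hm := by
    refine hs.hom_ext fun p => ?_
    have h1 : (ψ p.base).app p.fiber ≫ (hc p.base).desc (s.whisker (Grothendieck.ι H p.base))
        = s.ι.app p := (hc p.base).fac _ p.fiber
    rw [hs.fac]
    dsimp [coconeXofY, coconeYofX] at *
    rw [← h1]
    exact (Category.assoc _ _ _).trans (congrArg ((ψ p.base).app p.fiber ≫ ·) (hm p.base))

def isColimitCoconeXofY {t : Cocone Y} (ht : IsColimit t) :
    IsColimit (coconeXofY X Y ψ hnat t) where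
  desc s := ht.desc (coconeYofX X Y ψ hnat hc s)
  fac s p := by
    dsimp [coconeXofY]
    refine (Category.assoc _ _ _).trans ((congrArg ((ψ p.base).app p.fiber ≫ ·) (ht.fac _ p.base)).trans ?_)
    dsimp [coconeYofX]
    exact (hc p.base).fac _ p.fiber
  uniq s m hm := by
    refine ht.hom_ext fun d => ?_
    rw [ht.fac]
    refine (hc d).hom_ext fun x => ?_
    dsimp [coconeYofX]
    rw [(hc d).fac, ← Category.assoc]
    exact hm ((Grothendieck.ι H d).obj x)

end Part1

/-- Fubini for Grothendieck constructions: given `H : D ⥤ Cat` and a diagram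
`X : ∫_D H ⥤ M`, suppose the colimits of `X` over each fiber `H(d)` exist, assembled
into a functor `Y : D ⥤ M` (with colimiting cocones `ψ d`, compatible with the
transition functors). If either the colimit of `X` or the (outer) colimit of `Y`
exists, then both exist and are isomorphic. Moreover (key step) for each `d` the
inclusion of the fiber `p⁻¹(d)` into the comma category `(p ↓ d)` admits a left
adjoint, hence is right cofinal. -/
theorem grothendieck_fubini {D : Type u} [SmallCategory D] (H : D ⥤ Cat.{u, u})
    {M : Type w} [Category.{v} M] (X : Grothendieck H ⥤ M)
    (Y : D ⥤ M)
    (ψ : ∀ d : D, (Grothendieck.ι H d ⋙ X) ⟶ (Functor.const ↑(H.obj d)).obj (Y.obj d))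
    (hψ : ∀ d : D, Nonempty (IsColimit (⟨Y.obj d, ψ d⟩ : Cocone (Grothendieck.ι H d ⋙ X))))
    (hnat : ∀ {d d' : D} (f : d ⟶ d') (x : ↑(H.obj d)),
      (ψ d).app x ≫ Y.map f =
        X.map ((Grothendieck.ιNatTrans f).app x) ≫ (ψ d').app ((H.map f).toFunctor.obj x)) :
    ((HasColimit X ∨ HasColimit Y) →
      ∃ (cX : Cocone X) (cY : Cocone Y),
        Nonempty (IsColimit cX) ∧ Nonempty (IsColimit cY) ∧ Nonempty (cX.pt ≅ cY.pt)) ∧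
    (∀ d : D,
      ∃ (ι : ↑(H.obj d) ⥤ CostructuredArrow (Grothendieck.forget H) d)
        (L : CostructuredArrow (Grothendieck.forget H) d ⥤ ↑(H.obj d)),
        Nonempty (L ⊣ ι) ∧ ι.Final ∧
        Nonempty (ι ⋙ CostructuredArrow.proj (Grothendieck.forget H) d ≅
          Grothendieck.ι H d)) := by
  constructor
  · intro h
    have hc : ∀ d : D, IsColimit (⟨Y.obj d, ψ d⟩ : Cocone (Grothendieck.ι H d ⋙ X)) :=
      fun d => (hψ d).some
    have hnat' : ∀ (d d' : D) (f : d ⟶ d') (x : ↑(H.obj d)),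
        (ψ d).app x ≫ Y.map f =
          X.map ((Grothendieck.ιNatTrans f).app x) ≫ (ψ d').app ((H.map f).toFunctor.obj x) :=
      fun _ _ f x => hnat f x
    rcases h with h | h
    · exact ⟨colimit.cocone X, coconeYofX X Y ψ hnat' hc (colimit.cocone X),
        ⟨colimit.isColimit X⟩, ⟨isColimitCoconeYofX X Y ψ hnat' hc (colimit.isColimit X)⟩,
        ⟨Iso.refl _⟩⟩
    · exact ⟨coconeXofY X Y ψ hnat' (colimit.cocone Y), colimit.cocone Y,
        ⟨isColimitCoconeXofY X Y ψ hnat' hc (colimit.isColimit Y)⟩, ⟨colimit.isColimit Y⟩,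
        ⟨Iso.refl _⟩⟩
  · intro d
    exact ⟨fiberIncl H d, fiberL H d, ⟨fiberAdj H d⟩,
      Functor.final_of_adjunction (fiberAdj H d), ⟨Iso.refl _⟩⟩
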